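/- arXiv:2105.09592 — 5 statements merged into one kernel-verified Lean document; each statement's English description precedes it below -/
import Mathlib

section
/- Let $f : \mathbb{R} \to \mathbb{R}$ be continuous and nonnegative, let $a < d$ and $c_1 < c_2$ be reals, and define $D(b) = \int_a^b (x - c_1)^2 f(x)\,dx + \int_b^d (x - c_2)^2 f(x)\,dx$ for $b \in (a, d)$. Then $D$ is differentiable on $(a,d)$ with $D'(b) = f(b)\big((b - c_1)^2 - (b - c_2)^2\big)$; consequently, at any point $b \in (a,d)$ with $f(b) > 0$, $D'(b) = 0$ if and only if $b = (c_1 + c_2)/2$. -/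
open MeasureTheory intervalIntegral

/-- Lloyd–Max boundary criterion: the distortion
`D(b) = ∫_a^b (x-c₁)² f + ∫_b^d (x-c₂)² f` of two adjacent cells is
differentiable on `(a,d)` with `D'(b) = f(b)((b-c₁)² - (b-c₂)²)`, and at any
`b` with `f(b) > 0` the derivative vanishes iff `b` is the midpoint
`(c₁+c₂)/2`. -/
theorem lloyd_max_boundary_criterion
    (f : ℝ → ℝ) (hf : Continuous f) (hf0 : ∀ x, 0 ≤ f x)
    (a d c₁ c₂ : ℝ) (had : a < d) (hc : c₁ < c₂)
    (D : ℝ → ℝ)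
    (hD : ∀ b, D b = (∫ x in a..b, (x - c₁) ^ 2 * f x) +
      ∫ x in b..d, (x - c₂) ^ 2 * f x) :
    ∀ b ∈ Set.Ioo a d,
      HasDerivAt D (f b * ((b - c₁) ^ 2 - (b - c₂) ^ 2)) b ∧
      (0 < f b →
        (f b * ((b - c₁) ^ 2 - (b - c₂) ^ 2) = 0 ↔ b = (c₁ + c₂) / 2)) := by
  intro b hb
  have hg1 : Continuous fun x : ℝ => (x - c₁) ^ 2 * f x := by continuity
  have hg2 : Continuous fun x : ℝ => (x - c₂) ^ 2 * f x := by continuity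
  constructor
  · have hD' : ∀ t, D t = (∫ x in a..t, (x - c₁) ^ 2 * f x) +
        ((∫ x in a..d, (x - c₂) ^ 2 * f x) - ∫ x in a..t, (x - c₂) ^ 2 * f x) := by
      intro t
      rw [hD t]
      have : (∫ x in a..t, (x - c₂) ^ 2 * f x) + (∫ x in t..d, (x - c₂) ^ 2 * f x)
          = ∫ x in a..d, (x - c₂) ^ 2 * f x :=
        intervalIntegral.integral_add_adjacent_intervals
          (hg2.intervalIntegrable _ _) (hg2.intervalIntegrable _ _)
      linarith
    have h1 : HasDerivAt (fun t => ∫ x in a..t, (x - c₁) ^ 2 * f x)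
        ((b - c₁) ^ 2 * f b) b :=
      intervalIntegral.integral_hasDerivAt_right (hg1.intervalIntegrable _ _)
        (hg1.stronglyMeasurableAtFilter _ _) hg1.continuousAt
    have h2 : HasDerivAt (fun t => ∫ x in a..t, (x - c₂) ^ 2 * f x)
        ((b - c₂) ^ 2 * f b) b :=
      intervalIntegral.integral_hasDerivAt_right (hg2.intervalIntegrable _ _)
        (hg2.stronglyMeasurableAtFilter _ _) hg2.continuousAt
    have := h1.add ((hasDerivAt_const b (∫ x in a..d, (x - c₂) ^ 2 * f x)).sub h2)
    have heq : HasDerivAt (fun t => (∫ x in a..t, (x - c₁) ^ 2 * f x) +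
        ((∫ x in a..d, (x - c₂) ^ 2 * f x) - ∫ x in a..t, (x - c₂) ^ 2 * f x))
        (f b * ((b - c₁) ^ 2 - (b - c₂) ^ 2)) b := by
      exact this.congr_deriv (by ring)
    have : D = fun t => (∫ x in a..t, (x - c₁) ^ 2 * f x) +
        ((∫ x in a..d, (x - c₂) ^ 2 * f x) - ∫ x in a..t, (x - c₂) ^ 2 * f x) :=
      funext hD'
    rw [this]
    exact heq
  · intro hfb
    constructor
    · intro h
      have h2 : (b - c₁) ^ 2 - (b - c₂) ^ 2 = 0 := by
        rcases mul_eq_zero.1 h with h' | h'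
        · exact absurd h' (ne_of_gt hfb)
        · exact h'
      have : (c₂ - c₁) * (2 * b - c₁ - c₂) = 0 := by nlinarith
      rcases mul_eq_zero.1 this with h' | h'
      · linarith
      · linarith
    · intro h
      rw [h]; ring
end

section
/- Let $k : \mathbb{R} \to \mathbb{R}$ be differentiable and set $g = -k'$. Fix samples $x_1, \dots, x_N \in \mathbb{R}$, a bandwidth $h > 0$, and a constant $z_k > 0$, and define the kernel density estimate $\hat f(x) = \frac{z_k}{N h} \sum_{i=1}^N k\big(((x - x_i)/h)^2\big)$. Then $\hat f$ is differentiable and, for every $x$, $\hat f'(x) = \frac{2 z_k}{N h^3} \sum_{i=1}^N (x_i - x)\, g\big(((x_i - x)/h)^2\big)$; moreover, if $S(x) = \sum_{i=1}^N g\big(((x_i - x)/h)^2\big) \ne 0$, then $\hat f'(x) = \frac{2 z_k}{N h^3}\, S(x)\, m(x)$, where $m(x) = \frac{\sum_{i=1}^N x_i\, g(((x_i - x)/h)^2)}{\sum_{i=1}^N g(((x_i - x)/h)^2)} - x$ is the mean-shift vector. -/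
open scoped BigOperators

/-- Gradient of the kernel density estimate and the mean-shift vector:
with profile `k`, `g = -k'`, and
`f̂(x) = z_k/(Nh) ∑ᵢ k(((x - xᵢ)/h)²)`, one has
`f̂'(x) = (2 z_k/(N h³)) ∑ᵢ (xᵢ - x) g(((xᵢ - x)/h)²)`, and whenever
`S(x) = ∑ᵢ g(((xᵢ - x)/h)²) ≠ 0`,
`f̂'(x) = (2 z_k/(N h³)) S(x) m(x)` with mean-shift vector
`m(x) = (∑ᵢ xᵢ g(((xᵢ - x)/h)²))/S(x) - x`. -/
theorem kde_gradient_mean_shift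
    (k : ℝ → ℝ) (hk : Differentiable ℝ k)
    (g : ℝ → ℝ) (hg : ∀ t, g t = -deriv k t)
    (N : ℕ) (hN : 0 < N) (x : Fin N → ℝ)
    (h z_k : ℝ) (hh : 0 < h) (hz : 0 < z_k)
    (fhat : ℝ → ℝ)
    (hfhat : ∀ y, fhat y = z_k / (N * h) * ∑ i, k (((y - x i) / h) ^ 2)) :
    ∀ y : ℝ,
      HasDerivAt fhat
        (2 * z_k / (N * h ^ 3) * ∑ i, (x i - y) * g (((x i - y) / h) ^ 2)) y ∧
      ((∑ i, g (((x i - y) / h) ^ 2)) ≠ 0 →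
        deriv fhat y =
          2 * z_k / (N * h ^ 3) * (∑ i, g (((x i - y) / h) ^ 2)) *
            ((∑ i, x i * g (((x i - y) / h) ^ 2)) /
              (∑ i, g (((x i - y) / h) ^ 2)) - y)) := by
  have hh' : h ≠ 0 := ne_of_gt hh
  have hN' : (N : ℝ) ≠ 0 := Nat.cast_ne_zero.mpr hN.ne'
  have hfe : fhat = fun y => z_k / (N * h) * ∑ i, k (((y - x i) / h) ^ 2) :=
    funext hfhat
  intro y
  have key : HasDerivAt fhat
      (2 * z_k / (N * h ^ 3) * ∑ i, (x i - y) * g (((x i - y) / h) ^ 2)) y := by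
    have h1 : ∀ i : Fin N, HasDerivAt (fun y => k (((y - x i) / h) ^ 2))
        (2 * (x i - y) / h ^ 2 * g (((x i - y) / h) ^ 2)) y := by
      intro i
      have h0 : HasDerivAt (fun y => (y - x i) / h) (1 / h) y := by
        simpa using ((hasDerivAt_id y).sub_const (x i)).div_const h
      have h2 : HasDerivAt (fun y => ((y - x i) / h) ^ 2)
          ((2 : ℕ) * ((y - x i) / h) ^ 1 * (1 / h)) y := h0.pow 2
      have h3 := ((hk _).hasDerivAt.comp y h2)
      have heq : ((x i - y) / h) ^ 2 = ((y - x i) / h) ^ 2 := by ring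
      rw [heq, hg]
      refine HasDerivAt.congr_deriv h3 ?_
      field_simp
      ring
    have hsum : HasDerivAt (fun y => ∑ i, k (((y - x i) / h) ^ 2))
        (∑ i, 2 * (x i - y) / h ^ 2 * g (((x i - y) / h) ^ 2)) y := by
      exact HasDerivAt.fun_sum fun i _ => h1 i
    have := hsum.const_mul (z_k / (N * h))
    rw [hfe]
    refine HasDerivAt.congr_deriv this ?_
    rw [Finset.mul_sum, Finset.mul_sum]
    refine Finset.sum_congr rfl fun i _ => ?_
    field_simp
  refine ⟨key, fun hS => ?_⟩
  rw [key.deriv]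
  rw [mul_assoc]
  congr 1
  rw [mul_sub, mul_div_cancel₀ _ hS, Finset.sum_mul, ← Finset.sum_sub_distrib]
  refine Finset.sum_congr rfl fun i _ => ?_
  ring
end

section
/- Let $k : \mathbb{R} \to \mathbb{R}$ be differentiable, $g = -k'$, and let $x_1, \dots, x_N \in \mathbb{R}$, $h > 0$, $z_k > 0$, $z_g > 0$. Define $\hat f_K(x) = \frac{z_k}{Nh} \sum_{i=1}^N k\big(((x - x_i)/h)^2\big)$, $\hat f_G(x) = \frac{z_g}{Nh} \sum_{i=1}^N g\big(((x - x_i)/h)^2\big)$, and, whenever $\sum_i g(((x_i - x)/h)^2) \ne 0$, the mean-shift vector $m(x) = \frac{\sum_i x_i g(((x_i - x)/h)^2)}{\sum_i g(((x_i - x)/h)^2)} - x$. Then for every such $x$, $m(x)\, \hat f_G(x) = \frac{z_g h^2}{2 z_k}\, \hat f_K'(x)$; in particular the mean-shift vector points in the direction of the gradient of $\hat f_K$ wherever $\hat f_G(x) > 0$. -/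
open scoped BigOperators

/-- The mean-shift vector is a rescaled gradient of the shadow-kernel density
estimate: with `g = -k'`,
`f̂_K(x) = z_k/(Nh) ∑ᵢ k(((x-xᵢ)/h)²)`, `f̂_G(x) = z_g/(Nh) ∑ᵢ g(((x-xᵢ)/h)²)`,
and mean-shift vector `m(x)`, one has `m(x) f̂_G(x) = (z_g h²/(2 z_k)) f̂_K'(x)`
whenever `∑ᵢ g(((xᵢ-x)/h)²) ≠ 0`; in particular `m` has the sign of the
gradient of `f̂_K` wherever `f̂_G > 0`. -/
theorem mean_shift_is_scaled_gradient
    (k : ℝ → ℝ) (hk : Differentiable ℝ k)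
    (g : ℝ → ℝ) (hg : ∀ t, g t = -deriv k t)
    (N : ℕ) (hN : 0 < N) (x : Fin N → ℝ)
    (h z_k z_g : ℝ) (hh : 0 < h) (hzk : 0 < z_k) (hzg : 0 < z_g)
    (fK fG : ℝ → ℝ)
    (hfK : ∀ y, fK y = z_k / (N * h) * ∑ i, k (((y - x i) / h) ^ 2))
    (hfG : ∀ y, fG y = z_g / (N * h) * ∑ i, g (((y - x i) / h) ^ 2))
    (m : ℝ → ℝ)
    (hm : ∀ y, m y = (∑ i, x i * g (((x i - y) / h) ^ 2)) /
      (∑ i, g (((x i - y) / h) ^ 2)) - y) :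
    ∀ y : ℝ, (∑ i, g (((x i - y) / h) ^ 2)) ≠ 0 →
      m y * fG y = z_g * h ^ 2 / (2 * z_k) * deriv fK y ∧
      (0 < fG y → (0 < m y ↔ 0 < deriv fK y)) := by
  intro y hSg
  have hNR : (N : ℝ) ≠ 0 := Nat.cast_ne_zero.mpr hN.ne'
  have hhne : h ≠ 0 := hh.ne'
  have hsq : ∀ i : Fin N, ((x i - y) / h) ^ 2 = ((y - x i) / h) ^ 2 := by
    intro i; ring
  have hfKfun : fK = fun y => z_k / (N * h) * ∑ i, k (((y - x i) / h) ^ 2) :=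
    funext hfK
  have hD : HasDerivAt fK
      (z_k / (N * h) *
        ∑ i, deriv k (((y - x i) / h) ^ 2) * (2 * (y - x i) / h ^ 2)) y := by
    rw [hfKfun]
    apply HasDerivAt.const_mul
    apply HasDerivAt.fun_sum
    intro i _
    have h1 : HasDerivAt (fun y => ((y - x i) / h) ^ 2)
        (2 * ((y - x i) / h) ^ 1 * (1 / h)) y := by
      have h0 := ((hasDerivAt_id y).sub_const (x i)).div_const h
      simpa using h0.fun_pow 2
    have h2 := ((hk (((y - x i) / h) ^ 2)).hasDerivAt).comp y h1
    have heq : deriv k (((y - x i) / h) ^ 2) * (2 * (y - x i) / h ^ 2)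
        = deriv k (((y - x i) / h) ^ 2) * (2 * ((y - x i) / h) ^ 1 * (1 / h)) := by
      rw [pow_one]
      ring
    rw [heq]
    exact h2
  have hderiv : deriv fK y
      = z_k / (N * h) *
        ∑ i, deriv k (((y - x i) / h) ^ 2) * (2 * (y - x i) / h ^ 2) :=
    hD.deriv
  have hdk : ∀ t, deriv k t = -g t := by
    intro t; rw [hg]; ring
  have hsum : ∑ i, deriv k (((y - x i) / h) ^ 2) * (2 * (y - x i) / h ^ 2)
      = (2 / h ^ 2) * ((∑ i, x i * g (((y - x i) / h) ^ 2))
          - y * ∑ i, g (((y - x i) / h) ^ 2)) := by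
    have step : ∑ i, deriv k (((y - x i) / h) ^ 2) * (2 * (y - x i) / h ^ 2)
        = ∑ i, ((2 / h ^ 2) * (x i * g (((y - x i) / h) ^ 2))
            - (2 / h ^ 2) * (y * g (((y - x i) / h) ^ 2))) := by
      apply Finset.sum_congr rfl
      intro i _
      rw [hdk]
      generalize g (((y - x i) / h) ^ 2) = G
      field_simp
      ring
    rw [step, Finset.sum_sub_distrib, ← Finset.mul_sum, ← Finset.mul_sum,
      ← Finset.mul_sum, ← mul_sub]
  simp only [hsq] at hSg
  have hE : m y * fG y = z_g * h ^ 2 / (2 * z_k) * deriv fK y := by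
    rw [hm, hfG, hderiv, hsum]
    simp only [hsq]
    set A := ∑ i, x i * g (((y - x i) / h) ^ 2) with hA
    set S := ∑ i, g (((y - x i) / h) ^ 2) with hS
    field_simp
  refine ⟨hE, fun hfGpos => ?_⟩
  have hc : 0 < z_g * h ^ 2 / (2 * z_k) := by positivity
  constructor
  · intro hmpos
    nlinarith [mul_pos hmpos hfGpos]
  · intro hdpos
    nlinarith [mul_pos hc hdpos]
end

section
/- Let $N = mM$ with $m, M \ge 1$, and let $u, s \in \mathbb{R}^N$. For $i = 1, \dots, M$ let $\bar u_i = \frac{1}{m}\sum_{j = m(i-1)+1}^{mi} u_j$ and $\bar s_i = \frac{1}{m}\sum_{j = m(i-1)+1}^{mi} s_j$ be the segment averages. Then $m \sum_{i=1}^M (\bar u_i - \bar s_i)^2 \le \sum_{j=1}^N (u_j - s_j)^2$; equivalently, the PAA distance $\sqrt{\frac{N}{M} \sum_{i=1}^M (\bar u_i - \bar s_i)^2}$ lower-bounds the Euclidean distance $\|u - s\|_2$. -/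
open scoped BigOperators

lemma sum_block (f : ℕ → ℝ) (m : ℕ) : ∀ M : ℕ,
    ∑ j ∈ Finset.range (m * M), f j =
      ∑ i ∈ Finset.range M, ∑ j ∈ Finset.range m, f (m * i + j) := by
  intro M
  induction M with
  | zero => simp
  | succ M ih =>
    rw [Nat.mul_succ, Finset.sum_range_add, ih, Finset.sum_range_succ]

/-- The PAA distance lower-bounds the Euclidean distance: for time series
`u, s` of length `N = mM` with segment averages `ū, s̄`,
`m ∑ᵢ (ūᵢ - s̄ᵢ)² ≤ ∑ⱼ (uⱼ - sⱼ)²`, equivalently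
`√((N/M) ∑ᵢ (ūᵢ - s̄ᵢ)²) ≤ ‖u - s‖₂`. -/
theorem paa_lower_bounds_euclidean
    (m M : ℕ) (hm : 1 ≤ m) (hM : 1 ≤ M)
    (u s : ℕ → ℝ)
    (ubar sbar : ℕ → ℝ)
    (hubar : ∀ i, ubar i = (1 / (m : ℝ)) * ∑ j ∈ Finset.range m, u (m * i + j))
    (hsbar : ∀ i, sbar i = (1 / (m : ℝ)) * ∑ j ∈ Finset.range m, s (m * i + j)) :
    (m : ℝ) * ∑ i ∈ Finset.range M, (ubar i - sbar i) ^ 2 ≤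
      ∑ j ∈ Finset.range (m * M), (u j - s j) ^ 2 ∧
    Real.sqrt (((m * M : ℕ) : ℝ) / (M : ℝ) *
        ∑ i ∈ Finset.range M, (ubar i - sbar i) ^ 2) ≤
      Real.sqrt (∑ j ∈ Finset.range (m * M), (u j - s j) ^ 2) := by
  have hm0 : (0:ℝ) < m := by exact_mod_cast hm
  have hM0 : (0:ℝ) < M := by exact_mod_cast hM
  have key : (m : ℝ) * ∑ i ∈ Finset.range M, (ubar i - sbar i) ^ 2 ≤
      ∑ j ∈ Finset.range (m * M), (u j - s j) ^ 2 := by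
    rw [sum_block (fun j => (u j - s j) ^ 2) m M, Finset.mul_sum]
    apply Finset.sum_le_sum
    intro i _
    have hcs := sq_sum_le_card_mul_sum_sq
      (s := Finset.range m) (f := fun j => u (m * i + j) - s (m * i + j))
    simp only [Finset.card_range] at hcs
    have : ubar i - sbar i =
        (1 / (m : ℝ)) * ∑ j ∈ Finset.range m, (u (m * i + j) - s (m * i + j)) := by
      rw [hubar, hsbar, Finset.sum_sub_distrib]
      ring
    rw [this, mul_pow]
    rw [div_pow, one_pow]
    have : (m : ℝ) * (1 / (m:ℝ)^2 * (∑ j ∈ Finset.range m, (u (m * i + j) - s (m * i + j)))^2)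
        = (∑ j ∈ Finset.range m, (u (m * i + j) - s (m * i + j)))^2 / m := by
      field_simp
    rw [this, div_le_iff₀ hm0, mul_comm _ (m:ℝ)]
    exact hcs
  refine ⟨key, Real.sqrt_le_sqrt ?_⟩
  have : ((m * M : ℕ) : ℝ) / (M : ℝ) = (m : ℝ) := by
    push_cast; field_simp
  rw [this]
  exact key
end

section
/- Let $N = mM$ with $m, M \ge 1$, let $u, s \in \mathbb{R}^N$, and let $\bar u_i, \bar s_i$ ($i = 1,\dots,M$) be the segment averages of $u$ and $s$ over the $M$ consecutive blocks of length $m$. Suppose for each $i$ we are given cutlines $\beta_{L_i} \le \beta_{U_i}$ with $\beta_{L_i} \le \bar s_i \le \beta_{U_i}$. Define for each $i$ the clipped term $t_i = (\beta_{L_i} - \bar u_i)^2$ if $\beta_{L_i} > \bar u_i$, $t_i = (\beta_{U_i} - \bar u_i)^2$ if $\beta_{U_i} < \bar u_i$, and $t_i = 0$ otherwise. Then $\sqrt{\frac{N}{M}\sum_{i=1}^M t_i} \le \sqrt{\frac{N}{M}\sum_{i=1}^M (\bar u_i - \bar s_i)^2} \le \|u - s\|_2$. In particular, the lower-bounding property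 of the $mindist\_PAA$ measure holds for arbitrary quantization intervals, not only the equiprobable Gaussian ones. -/
open scoped BigOperators

lemma sum_range_mul_blocks (m M : ℕ) (f : ℕ → ℝ) :
    ∑ j ∈ Finset.range (m * M), f j
      = ∑ i ∈ Finset.range M, ∑ j ∈ Finset.range m, f (m * i + j) := by
  induction M with
  | zero => simp
  | succ n ih =>
      rw [Nat.mul_succ, Finset.sum_range_add, ih, Finset.sum_range_succ]

/-- Lower-bounding property of `mindist_PAA` for arbitrary quantization
intervals: if each PAA value `s̄ᵢ` lies between its cutlines
`β_{Lᵢ} ≤ s̄ᵢ ≤ β_{Uᵢ}` and the clipped terms `tᵢ` are defined by the three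
cases, then
`√((N/M) ∑ tᵢ) ≤ √((N/M) ∑ (ūᵢ - s̄ᵢ)²) ≤ ‖u - s‖₂`. -/
theorem mindist_paa_lower_bounds_euclidean
    (m M : ℕ) (hm : 1 ≤ m) (hM : 1 ≤ M)
    (u s : ℕ → ℝ)
    (ubar sbar : ℕ → ℝ)
    (hubar : ∀ i, ubar i = (1 / (m : ℝ)) * ∑ j ∈ Finset.range m, u (m * i + j))
    (hsbar : ∀ i, sbar i = (1 / (m : ℝ)) * ∑ j ∈ Finset.range m, s (m * i + j))
    (βL βU : ℕ → ℝ)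
    (hcut : ∀ i < M, βL i ≤ βU i)
    (hin : ∀ i < M, βL i ≤ sbar i ∧ sbar i ≤ βU i)
    (t : ℕ → ℝ)
    (ht : ∀ i, t i =
      if βL i > ubar i then (βL i - ubar i) ^ 2
      else if βU i < ubar i then (βU i - ubar i) ^ 2
      else 0) :
    Real.sqrt (((m * M : ℕ) : ℝ) / (M : ℝ) * ∑ i ∈ Finset.range M, t i) ≤
      Real.sqrt (((m * M : ℕ) : ℝ) / (M : ℝ) *
        ∑ i ∈ Finset.range M, (ubar i - sbar i) ^ 2) ∧
    Real.sqrt (((m * M : ℕ) : ℝ) / (M : ℝ) *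
        ∑ i ∈ Finset.range M, (ubar i - sbar i) ^ 2) ≤
      Real.sqrt (∑ j ∈ Finset.range (m * M), (u j - s j) ^ 2) := by
  have hm0 : (0:ℝ) < m := by exact_mod_cast hm
  have hM0 : (0:ℝ) < M := by exact_mod_cast hM
  have hcoef : ((m * M : ℕ) : ℝ) / (M : ℝ) = (m : ℝ) := by
    push_cast; field_simp
  constructor
  · apply Real.sqrt_le_sqrt
    apply mul_le_mul_of_nonneg_left _ (by positivity)
    apply Finset.sum_le_sum
    intro i hi
    have hi' := Finset.mem_range.mp hi
    obtain ⟨hL, hU⟩ := hin i hi'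
    rw [ht i]
    split_ifs with h1 h2
    · -- βL i > ubar i, sbar i ≥ βL i > ubar i
      have : βL i - ubar i ≤ sbar i - ubar i := by linarith
      have h0 : 0 ≤ βL i - ubar i := by linarith
      calc (βL i - ubar i) ^ 2 ≤ (sbar i - ubar i) ^ 2 := by nlinarith
        _ = (ubar i - sbar i) ^ 2 := by ring
    · have : ubar i - βU i ≤ ubar i - sbar i := by linarith
      have h0 : 0 ≤ ubar i - βU i := by linarith
      calc (βU i - ubar i) ^ 2 = (ubar i - βU i) ^ 2 := by ring
        _ ≤ (ubar i - sbar i) ^ 2 := by nlinarith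
    · positivity
  · apply Real.sqrt_le_sqrt
    rw [hcoef, sum_range_mul_blocks m M (fun j => (u j - s j) ^ 2),
      Finset.mul_sum]
    apply Finset.sum_le_sum
    intro i _
    have key := sq_sum_le_card_mul_sum_sq
      (s := Finset.range m) (f := fun j => u (m * i + j) - s (m * i + j))
    simp only [Finset.card_range] at key
    have hub : ubar i - sbar i
        = (1 / (m : ℝ)) * ∑ j ∈ Finset.range m, (u (m * i + j) - s (m * i + j)) := by
      rw [hubar i, hsbar i, Finset.sum_sub_distrib]; ring
    rw [hub]
    rw [mul_pow]
    rw [div_pow, one_pow]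
    rw [← mul_assoc]
    have : (m : ℝ) * (1 / (m:ℝ)^2) = 1 / m := by field_simp
    rw [this, div_mul_eq_mul_div, div_le_iff₀ hm0, one_mul]
    calc (∑ j ∈ Finset.range m, (u (m * i + j) - s (m * i + j))) ^ 2
        ≤ (m : ℝ) * ∑ j ∈ Finset.range m, (u (m * i + j) - s (m * i + j)) ^ 2 := key
      _ = (∑ j ∈ Finset.range m, (u (m * i + j) - s (m * i + j)) ^ 2) * m := by ring
end
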